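/- In the polynomial ring k[a1,...,ar] (r ≥ 2, indices mod r), the ideal B0 = (a_j^6, a_j^5 * a_{j+1} : j ∈ [r]) and Bc = (c) * (a1^4 * ... * ar^4) in k[a1,...,ar,c] satisfy Bc^2 ⊆ B0^2 and Bc * B0 ⊆ B0^2. -/

import Mathlib

open MvPolynomial

/-- The variables `a_1, …, a_r` (as `Fin (r+2)`, so that `r ≥ 2`) together with `c`. -/
abbrev AVar (r : ℕ) := Fin (r + 2) ⊕ Unit

noncomputable def aa {k : Type*} [Field k] (r : ℕ) (j : Fin (r + 2)) :
    MvPolynomial (AVar r) k := X (Sum.inl j)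

noncomputable def cc {k : Type*} [Field k] (r : ℕ) :
    MvPolynomial (AVar r) k := X (Sum.inr ())

/-- `B0 = (a_j^6, a_j^5 a_{j+1} : j)` with cyclic indices. -/
noncomputable def B0 {k : Type*} [Field k] (r : ℕ) : Ideal (MvPolynomial (AVar r) k) :=
  Ideal.span
    ((Set.range fun j : Fin (r + 2) => aa r j ^ 6) ∪
      Set.range fun j : Fin (r + 2) => aa r j ^ 5 * aa r (j + 1))

/-- `Bc = (c · a_1^4 ⋯ a_r^4)`. -/
noncomputable def Bc {k : Type*} [Field k] (r : ℕ) : Ideal (MvPolynomial (AVar r) k) :=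
  Ideal.span {cc r * ∏ j : Fin (r + 2), aa r j ^ 4}

lemma prod_extract2 {n : ℕ} {M : Type*} [CommMonoid M] (f : Fin n → M) {i j : Fin n}
    (h : i ≠ j) : ∃ q, ∏ t, f t = f i * f j * q := by
  refine ⟨∏ t ∈ (Finset.univ.erase i).erase j, f t, ?_⟩
  rw [mul_assoc, Finset.mul_prod_erase _ f (show j ∈ Finset.univ.erase i from
      Finset.mem_erase.mpr ⟨h.symm, Finset.mem_univ j⟩),
    Finset.mul_prod_erase _ f (Finset.mem_univ i)]

lemma prod_extract3 {n : ℕ} {M : Type*} [CommMonoid M] (f : Fin n → M) {i j l : Fin n}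
    (hij : i ≠ j) (hil : i ≠ l) (hjl : j ≠ l) : ∃ q, ∏ t, f t = f i * f j * f l * q := by
  refine ⟨∏ t ∈ ((Finset.univ.erase i).erase j).erase l, f t, ?_⟩
  rw [mul_assoc, mul_assoc, Finset.mul_prod_erase _ f (show l ∈ (Finset.univ.erase i).erase j from
      Finset.mem_erase.mpr ⟨hjl.symm, Finset.mem_erase.mpr ⟨hil.symm, Finset.mem_univ l⟩⟩),
    Finset.mul_prod_erase _ f (show j ∈ Finset.univ.erase i from
      Finset.mem_erase.mpr ⟨hij.symm, Finset.mem_univ j⟩),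
    Finset.mul_prod_erase _ f (Finset.mem_univ i)]

lemma fin_ne_add_one {n : ℕ} (i : Fin (n + 2)) : i ≠ i + 1 := by
  intro h
  have h0 : (0 : Fin (n + 2)) = 1 := by
    have : i + 0 = i + 1 := by rw [add_zero]; exact h
    exact add_left_cancel this
  have := congrArg Fin.val h0
  simp [Fin.val_one] at this

lemma fin_ne_add_two {n : ℕ} (hn : 1 ≤ n) (i : Fin (n + 2)) : i ≠ i + 1 + 1 := by
  intro h
  have h0 : (0 : Fin (n + 2)) = 1 + 1 := by
    have : i + 0 = i + (1 + 1) := by rw [add_zero, ← add_assoc]; exact h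
    exact add_left_cancel this
  have := congrArg Fin.val h0
  rw [Fin.val_zero, Fin.val_add, Fin.val_one] at this
  rw [Nat.mod_eq_of_lt (by omega)] at this
  omega

theorem stmt2 {k : Type*} [Field k] (r : ℕ) :
    (Bc (k := k) r) ^ 2 ≤ (B0 (k := k) r) ^ 2 ∧
      Bc (k := k) r * B0 (k := k) r ≤ (B0 (k := k) r) ^ 2 := by
  classical
  have h6 : ∀ j, aa (k := k) r j ^ 6 ∈ B0 (k := k) r := fun j =>
    Ideal.subset_span (Set.mem_union_left _ ⟨j, rfl⟩)
  have h5 : ∀ j, aa (k := k) r j ^ 5 * aa r (j + 1) ∈ B0 (k := k) r := fun j =>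
    Ideal.subset_span (Set.mem_union_right _ ⟨j, rfl⟩)
  constructor
  · rw [Bc, Ideal.span_singleton_pow, Ideal.span_le, Set.singleton_subset_iff]
    obtain ⟨q, hq⟩ := prod_extract2 (fun j : Fin (r + 2) => aa (k := k) r j ^ 4)
      (fin_ne_add_one 0)
    have key : (cc (k := k) r * ∏ j : Fin (r + 2), aa r j ^ 4) ^ 2 =
        (aa r 0 ^ 6 * aa r (0 + 1) ^ 6) *
          (cc r ^ 2 * aa r 0 ^ 2 * aa r (0 + 1) ^ 2 * q ^ 2) := by
      rw [hq]; ring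
    rw [SetLike.mem_coe, key, pow_two]
    exact Ideal.mul_mem_right _ _ (Ideal.mul_mem_mul (h6 0) (h6 (0 + 1)))
  · rw [Bc, B0, Ideal.span_mul_span, Ideal.span_le]
    intro x hx
    simp only [Set.mem_mul, Set.mem_singleton_iff, Set.mem_union, Set.mem_range] at hx
    obtain ⟨p, hp, g, hg, rfl⟩ := hx
    subst hp
    rw [SetLike.mem_coe]
    rcases hg with ⟨i, rfl⟩ | ⟨i, rfl⟩
    · obtain ⟨q, hq⟩ := prod_extract2 (fun j : Fin (r + 2) => aa (k := k) r j ^ 4)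
        (fin_ne_add_one i)
      have key : (cc (k := k) r * ∏ j : Fin (r + 2), aa r j ^ 4) * aa r i ^ 6 =
          ((aa r i ^ 5 * aa r (i + 1)) * (aa r i ^ 5 * aa r (i + 1))) *
            (cc r * aa r (i + 1) ^ 2 * q) := by
        rw [hq]; ring
      rw [key, pow_two]
      exact Ideal.mul_mem_right _ _ (Ideal.mul_mem_mul (h5 i) (h5 i))
    · rcases Nat.eq_zero_or_pos r with rfl | hr
      · obtain ⟨q, hq⟩ := prod_extract2 (fun j : Fin 2 => aa (k := k) 0 j ^ 4)
          (fin_ne_add_one i)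
        have hii : i + 1 + 1 = i := by
          rw [add_assoc, show (1 : Fin 2) + 1 = 0 by decide, add_zero]
        have key : (cc (k := k) 0 * ∏ j : Fin 2, aa 0 j ^ 4) * (aa 0 i ^ 5 * aa 0 (i + 1)) =
            ((aa 0 i ^ 6) * (aa 0 (i + 1) ^ 5 * aa 0 (i + 1 + 1))) *
              (cc 0 * aa 0 i ^ 2 * q) := by
          rw [hq, hii]; ring
        rw [key, pow_two]
        exact Ideal.mul_mem_right _ _ (Ideal.mul_mem_mul (h6 i) (h5 (i + 1)))
      · obtain ⟨q, hq⟩ := prod_extract3 (fun j : Fin (r + 2) => aa (k := k) r j ^ 4)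
          (fin_ne_add_one i) (fin_ne_add_two hr i) (fin_ne_add_one (i + 1))
        have key : (cc (k := k) r * ∏ j : Fin (r + 2), aa r j ^ 4) *
            (aa r i ^ 5 * aa r (i + 1)) =
            ((aa r i ^ 6) * (aa r (i + 1) ^ 5 * aa r (i + 1 + 1))) *
              (cc r * aa r i ^ 3 * aa r (i + 1 + 1) ^ 3 * q) := by
          rw [hq]; ring
        rw [key, pow_two]
        exact Ideal.mul_mem_right _ _ (Ideal.mul_mem_mul (h6 i) (h5 (i + 1)))
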